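/- Let $f:[0,T]\to\mathbb{R}$ be a $C^2$ function with $f(0)=0$, $0\le f'(0)\le 1$, and suppose $f''(t) \ge -\alpha\sqrt{1-f'(t)^2}$ whenever $|f'(t)|\le 1$, for some $\alpha>0$. Let $\mu:[0,T]\to\mathbb{R}^2$ be the clockwise unit-speed parametrization of a circle of radius $1/\alpha$ with $\mu(0)=(0,0)$ and second coordinate of $\mu'(0)$ equal to $f'(0)$. Then for all $t$ such that the second coordinate of $\mu$ is nondecreasing on $[0,t]$, one has $f(t) \ge x_2(\mu(t))$. -/

import Mathlib

open Set Real

set_option maxHeartbeats 1000000 in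
/-- ODE comparison with a circle. Let `f` be `C²` on `[0,T]` with
`f 0 = 0`, `0 ≤ f' 0 ≤ 1`, and `f'' t ≥ -α √(1 - f'(t)²)` whenever `|f' t| ≤ 1`.
Let `μ` be the clockwise unit-speed circle of radius `1/α` with `μ 0 = (0,0)` and
second coordinate of `μ' 0` equal to `f' 0` (explicitly
`μ t = ((sin φ₀ - sin (φ₀ - α t))/α, (cos (φ₀ - α t) - cos φ₀)/α)` with
`φ₀ = arcsin (f' 0)`).  Then for every `t ∈ [0,T]` such that the second
coordinate of `μ` is nondecreasing on `[0,t]`, one has `f t ≥ x₂(μ t)`. -/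
theorem circle_comparison (T α : ℝ) (hα : 0 < α) (f f' f'' : ℝ → ℝ)
    (hf : ∀ t ∈ Icc (0:ℝ) T, HasDerivAt f (f' t) t)
    (hf' : ∀ t ∈ Icc (0:ℝ) T, HasDerivAt f' (f'' t) t)
    (hf''cont : ContinuousOn f'' (Icc (0:ℝ) T))
    (hf0 : f 0 = 0) (hf'0 : 0 ≤ f' 0) (hf'1 : f' 0 ≤ 1)
    (hcurv : ∀ t ∈ Icc (0:ℝ) T, |f' t| ≤ 1 →
      f'' t ≥ -α * Real.sqrt (1 - (f' t) ^ 2)) :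
    ∀ t ∈ Icc (0:ℝ) T,
      (MonotoneOn
        (fun s => (Real.cos (Real.arcsin (f' 0) - α * s)
          - Real.cos (Real.arcsin (f' 0))) / α) (Icc (0:ℝ) t)) →
      f t ≥ (Real.cos (Real.arcsin (f' 0) - α * t)
          - Real.cos (Real.arcsin (f' 0))) / α := by
  intro t ht hmono
  obtain ⟨ht0, htT⟩ := ht
  set φ₀ := Real.arcsin (f' 0) with hφ₀def
  have hπ : (0:ℝ) < π := Real.pi_pos
  have hsin0 : Real.sin φ₀ = f' 0 := Real.sin_arcsin (by linarith) hf'1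
  have hφ₀0 : 0 ≤ φ₀ := Real.arcsin_nonneg.2 hf'0
  have hφ₀2 : φ₀ ≤ π / 2 := Real.arcsin_le_pi_div_two _
  -- Step A: φ₀ - α t ≥ 0
  have hθt : 0 ≤ φ₀ - α * t := by
    by_contra hneg
    push_neg at hneg
    set θ₁ := max (φ₀ - α * t) (-(π/2)) with hθ₁def
    have hθ₁neg : θ₁ < 0 := max_lt hneg (by linarith)
    have hθ₁ge : -(π/2) ≤ θ₁ := le_max_right _ _
    set s₀ := φ₀ / α with hs₀def
    set s₁ := (φ₀ - θ₁) / α with hs₁def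
    have hs₀0 : 0 ≤ s₀ := div_nonneg hφ₀0 hα.le
    have hs01 : s₀ ≤ s₁ := (div_le_div_iff_of_pos_right hα).2 (by linarith)
    have hs₁t : s₁ ≤ t := by
      rw [hs₁def, div_le_iff₀ hα]
      have := le_max_left (φ₀ - α * t) (-(π/2))
      linarith
    have h1 := hmono ⟨hs₀0, hs01.trans hs₁t⟩ ⟨hs₀0.trans hs01, hs₁t⟩ hs01
    have e0 : φ₀ - α * s₀ = 0 := by rw [hs₀def]; field_simp; ring
    have e1 : φ₀ - α * s₁ = θ₁ := by rw [hs₁def]; field_simp; ring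
    simp only [e0, e1] at h1
    have h2 : Real.cos 0 ≤ Real.cos θ₁ := by
      have := (div_le_div_iff_of_pos_right hα).1 h1
      linarith
    have h3 : Real.cos (-θ₁) < Real.cos 0 := by
      apply Real.cos_lt_cos_of_nonneg_of_le_pi (le_refl 0) (by linarith) (by linarith)
    rw [Real.cos_neg] at h3
    linarith
  -- Step B: strict comparison for perturbed circles
  have key : ∀ ε : ℝ, 0 < ε → α * ε * (t + 1) < π / 2 →
      ∀ s ∈ Icc (0:ℝ) t, Real.sin (φ₀ - (α * (1 + ε)) * s - α * ε) < f' s := by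
    intro ε hε hεπ
    set c := α * (1 + ε) with hcdef
    have hc : 0 < c := by nlinarith
    set v : ℝ → ℝ := fun s => Real.sin (φ₀ - c * s - α * ε) with hvdef
    have hvcont : Continuous v := by fun_prop
    have hinner : ∀ s : ℝ, HasDerivAt (fun s => φ₀ - c * s - α * ε) (-c) s := by
      intro s
      have h1 : HasDerivAt (fun s : ℝ => c * s) c s := by
        simpa using (hasDerivAt_id s).const_mul c
      simpa using (h1.const_sub φ₀).sub_const (α * ε)
    have hv : ∀ s : ℝ, HasDerivAt v (Real.cos (φ₀ - c * s - α * ε) * (-c)) s := by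
      intro s
      exact (Real.hasDerivAt_sin _).comp s (hinner s)
    by_contra hcon
    push_neg at hcon
    obtain ⟨sbad, hsbad, hbad⟩ := hcon
    set S := Icc (0:ℝ) t ∩ (fun s => f' s - v s) ⁻¹' (Iic 0) with hSdef
    have hf'cont : ∀ s ∈ Icc (0:ℝ) t, ContinuousAt f' s := fun s hs =>
      (hf' s ⟨hs.1, hs.2.trans htT⟩).continuousAt
    have hclosed : IsClosed S := by
      apply ContinuousOn.preimage_isClosed_of_isClosed ?_ isClosed_Icc isClosed_Iic
      exact ContinuousOn.sub (fun s hs => (hf'cont s hs).continuousWithinAt)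
        hvcont.continuousOn
    have hSne : S.Nonempty := ⟨sbad, hsbad, by simpa using hbad⟩
    have hbdd : BddBelow S := ⟨0, fun x hx => hx.1.1⟩
    set s₀ := sInf S with hs₀def
    have hs₀S : s₀ ∈ S := hclosed.csInf_mem hSne hbdd
    have hs₀Icc : s₀ ∈ Icc (0:ℝ) t := hs₀S.1
    have hαε : α * ε < π / 2 := by nlinarith
    have h0pos : 0 < f' 0 - v 0 := by
      have hv0 : v 0 = Real.sin (φ₀ - α * ε) := by simp [hvdef]
      have hαε0 : 0 < α * ε := mul_pos hα hε
      have hmono' := Real.strictMonoOn_sin (a := φ₀ - α * ε) (b := φ₀)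
        ⟨by linarith, by linarith⟩ ⟨by linarith, by linarith⟩ (by linarith)
      rw [hv0]
      linarith [hsin0, hmono']
    have hs₀pos : 0 < s₀ := by
      rcases eq_or_lt_of_le hs₀Icc.1 with h | h
      · exfalso
        have := hs₀S.2
        rw [← h] at this
        simp only [Set.mem_preimage, Set.mem_Iic] at this
        linarith
      · exact h
    have hpos : ∀ s ∈ Ico (0:ℝ) s₀, 0 < f' s - v s := by
      intro s hs
      by_contra hle
      push_neg at hle
      have hsS : s ∈ S := ⟨⟨hs.1, hs.2.le.trans hs₀Icc.2⟩, by simpa using hle⟩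
      exact absurd (csInf_le hbdd hsS) (not_le.2 hs.2)
    set θ₀ := φ₀ - c * s₀ - α * ε with hθ₀def
    have hθub : θ₀ < π / 2 := by
      have : 0 ≤ c * s₀ := mul_nonneg hc.le hs₀Icc.1
      rw [hθ₀def]; nlinarith
    have hθlb : -(π / 2) < θ₀ := by
      have h1 : α * s₀ ≤ α * t := by nlinarith [hs₀Icc.2]
      have h2 : α * ε * s₀ ≤ α * ε * t := by nlinarith [hs₀Icc.2, mul_pos hα hε]
      rw [hθ₀def, hcdef]; nlinarith
    have hcosθ : 0 < Real.cos θ₀ := Real.cos_pos_of_mem_Ioo ⟨hθlb, hθub⟩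
    have hle0 : f' s₀ - v s₀ ≤ 0 := by
      have := hs₀S.2; simpa using this
    have hge0 : 0 ≤ f' s₀ - v s₀ := by
      have hcont : ContinuousAt (fun s => f' s - v s) s₀ :=
        (hf'cont s₀ hs₀Icc).sub hvcont.continuousAt
      have htend : Filter.Tendsto (fun s => f' s - v s) (nhdsWithin s₀ (Iio s₀))
          (nhds (f' s₀ - v s₀)) := hcont.continuousWithinAt.tendsto
      refine ge_of_tendsto htend ?_
      filter_upwards [Ioo_mem_nhdsLT_of_mem (⟨hs₀pos, le_refl s₀⟩ : s₀ ∈ Ioc 0 s₀)]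
        with s hs
      exact (hpos s ⟨hs.1.le, hs.2⟩).le
    have hfs₀ : f' s₀ = Real.sin θ₀ := by
      have : v s₀ = Real.sin θ₀ := rfl
      linarith
    have habs : |f' s₀| ≤ 1 := by
      rw [hfs₀]; exact abs_le.2 ⟨Real.neg_one_le_sin _, Real.sin_le_one _⟩
    have hcurv' := hcurv s₀ ⟨hs₀Icc.1, hs₀Icc.2.trans htT⟩ habs
    have hsqrt : Real.sqrt (1 - (f' s₀) ^ 2) = Real.cos θ₀ := by
      rw [hfs₀, ← Real.cos_sq' θ₀, Real.sqrt_sq hcosθ.le]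
    rw [hsqrt] at hcurv'
    -- derivative of f' - v at s₀ is ≤ 0 since s₀ is a boundary min
    set D := f'' s₀ - Real.cos θ₀ * (-c) with hDdef
    have hD : HasDerivAt (fun s => f' s - v s) D s₀ :=
      (hf' s₀ ⟨hs₀Icc.1, hs₀Icc.2.trans htT⟩).sub (hv s₀)
    have hDle : D ≤ 0 := by
      have hW := (hD.hasDerivWithinAt (s := Iio s₀))
      rw [hasDerivWithinAt_iff_tendsto_slope] at hW
      have hset : Iio s₀ \ {s₀} = Iio s₀ := by
        apply Set.diff_singleton_eq_self; simp
      rw [hset] at hW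
      refine le_of_tendsto hW ?_
      filter_upwards [Ioo_mem_nhdsLT_of_mem (⟨hs₀pos, le_refl s₀⟩ : s₀ ∈ Ioc 0 s₀)]
        with s hs
      rw [slope_def_field]
      apply div_nonpos_of_nonneg_of_nonpos
      · have := hpos s ⟨hs.1.le, hs.2⟩
        have h0 : f' s₀ - v s₀ = 0 := le_antisymm hle0 hge0
        linarith
      · linarith [hs.2]
    have hprod : 0 < α * ε * Real.cos θ₀ := mul_pos (mul_pos hα hε) hcosθ
    rw [hDdef, hcdef] at hDle
    have hexp : f'' s₀ - Real.cos θ₀ * -(α * (1 + ε))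
        = f'' s₀ + α * Real.cos θ₀ + α * ε * Real.cos θ₀ := by ring
    rw [hexp] at hDle
    have hcurv2 : f'' s₀ ≥ -(α * Real.cos θ₀) := by linarith [hcurv']
    linarith
  -- Step C: limit ε → 0
  have hcomp : ∀ s ∈ Icc (0:ℝ) t, Real.sin (φ₀ - α * s) ≤ f' s := by
    intro s hs
    by_contra hlt
    push_neg at hlt
    set cfun : ℝ → ℝ := fun ε => Real.sin (φ₀ - (α * (1 + ε)) * s - α * ε) with hcfun
    have hccont : Continuous cfun := by fun_prop
    have hc0 : cfun 0 = Real.sin (φ₀ - α * s) := by norm_num [hcfun]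
    have hev1 : ∀ᶠ ε in nhds (0:ℝ), f' s < cfun ε :=
      hccont.continuousAt.eventually (eventually_gt_nhds (hc0 ▸ hlt))
    have hev2 : ∀ᶠ ε in nhds (0:ℝ), ε < π / (2 * (α * (t + 1))) :=
      eventually_lt_nhds (by positivity)
    haveI hne : (nhdsWithin (0:ℝ) (Ioi 0)).NeBot := nhdsGT_neBot 0
    obtain ⟨ε, ⟨hε1, hε2⟩, hε3⟩ :=
      (((hev1.and hev2).filter_mono nhdsWithin_le_nhds).and
        (self_mem_nhdsWithin : Ioi (0:ℝ) ∈ nhdsWithin (0:ℝ) (Ioi 0))).exists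
    have hε0 : 0 < ε := hε3
    have hεπ : α * ε * (t + 1) < π / 2 := by
      have h2 := (lt_div_iff₀ (by positivity : (0:ℝ) < 2 * (α * (t + 1)))).1 hε2
      nlinarith
    have := key ε hε0 hεπ s hs
    rw [hcfun] at hε1
    linarith
  -- Step D: integrate
  set g₀ : ℝ → ℝ := fun s => (Real.cos (φ₀ - α * s) - Real.cos φ₀) / α with hg₀def
  have hg₀d : ∀ s : ℝ, HasDerivAt g₀ (Real.sin (φ₀ - α * s)) s := by
    intro s
    have hinner : HasDerivAt (fun s : ℝ => φ₀ - α * s) (-α) s := by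
      have h1 : HasDerivAt (fun s : ℝ => α * s) α s := by
        simpa using (hasDerivAt_id s).const_mul α
      simpa using h1.const_sub φ₀
    have h1 := (Real.hasDerivAt_cos _).comp s hinner
    have h2 := (h1.sub_const (Real.cos φ₀)).div_const α
    exact h2.congr_deriv (by field_simp)
  set F : ℝ → ℝ := fun s => f s - g₀ s with hFdef
  have hFd : ∀ s ∈ Icc (0:ℝ) t, HasDerivAt F (f' s - Real.sin (φ₀ - α * s)) s :=
    fun s hs => (hf s ⟨hs.1, hs.2.trans htT⟩).sub (hg₀d s)
  have hFmono : MonotoneOn F (Icc (0:ℝ) t) := by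
    apply monotoneOn_of_deriv_nonneg (convex_Icc 0 t)
    · exact fun s hs => ((hFd s hs).continuousAt).continuousWithinAt
    · exact fun s hs =>
        (hFd s (interior_subset hs)).differentiableAt.differentiableWithinAt
    · intro s hs
      rw [(hFd s (interior_subset hs)).deriv]
      have := hcomp s (interior_subset hs)
      linarith
  have hft := hFmono ⟨le_refl 0, ht0⟩ ⟨ht0, le_refl t⟩ ht0
  have hF0 : F 0 = 0 := by simp [hFdef, hg₀def, hf0]
  have hFt : F t = f t - (Real.cos (φ₀ - α * t) - Real.cos φ₀) / α := rfl
  rw [hF0, hFt] at hft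
  linarith
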